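/- Suppose F: T_n → D_{m,k} satisfies 2^p·d(u,v) ≤ d(F(u),F(v)) ≤ α·2^p·d(u,v) for all vertices u,v, where p ≥ 0 is an integer. Suppose integers d and r with 1 ≤ r < n satisfy 2^{d−1} > α·2^p·(r+1), (2k)^{d−p} < 2^r, and 2^d < 2^p·(n−r). Then a contradiction follows; i.e., no such F, d, r can simultaneously exist. -/

import Mathlib

open SimpleGraph

/-- One subdivision step: replace each edge of `G` by internally disjoint
paths of length 2 indexed by `ι`. -/
def diamondStep {V : Type} (ι : Type) (G : SimpleGraph V) :
    SimpleGraph (V ⊕ (G.edgeSet × ι)) where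
  Adj x y :=
    match x, y with
    | Sum.inl u, Sum.inr e => u ∈ (e.1 : Sym2 V)
    | Sum.inr e, Sum.inl u => u ∈ (e.1 : Sym2 V)
    | _, _ => False
  symm := ⟨by rintro (u | e) (v | f) h <;> simp_all⟩
  loopless := ⟨by rintro (u | e) h <;> simp_all⟩

/-- The diamond graphs `D_{n,k}` with branch index type `ι` (take `ι = Fin k`
for branching `k` and `ι = ℕ` for infinite branching). -/
def Diamond (ι : Type) : (n : ℕ) → Σ V : Type, SimpleGraph V
  | 0 => ⟨Bool, ⊤⟩
  | n + 1 => ⟨_, diamondStep ι (Diamond ι n).2⟩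

/-- Vertex set of the diamond graph. -/
abbrev diamV (ι : Type) (n : ℕ) : Type := (Diamond ι n).1

/-- The diamond graph as a `SimpleGraph`. -/
abbrev diamG (ι : Type) (n : ℕ) : SimpleGraph (diamV ι n) := (Diamond ι n).2

/-- The two original vertices: `diamOrig ι n false` is the bottom,
`diamOrig ι n true` is the top of `D_{n,k}`. -/
def diamOrig (ι : Type) : (n : ℕ) → Bool → diamV ι n
  | 0, b => b
  | n + 1, b => Sum.inl (diamOrig ι n b)

/-- The bottom vertex of the diamond. -/
def diamBottom (ι : Type) (n : ℕ) : diamV ι n := diamOrig ι n false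

/-- The top vertex of the diamond. -/
def diamTop (ι : Type) (n : ℕ) : diamV ι n := diamOrig ι n true

/-- The canonical injection of `D_{n,k}` into `D_{n+j,k}`: each vertex is sent to
the vertex it evolves into. -/
def diamLift (ι : Type) (n : ℕ) : (j : ℕ) → diamV ι n → diamV ι (n + j)
  | 0, x => x
  | j + 1, x => Sum.inl (diamLift ι n j x)

/-- The complete binary tree of depth `n`: vertices are binary strings of
length `≤ n`. -/
def treeV (n : ℕ) : Type := {l : List Bool // l.length ≤ n}

/-- The graph structure of the binary tree `T_n`: a vertex is adjacent to its
one-letter extensions. -/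
def treeG (n : ℕ) : SimpleGraph (treeV n) where
  Adj u v := (∃ b, v.1 = b :: u.1) ∨ (∃ b, u.1 = b :: v.1)
  symm := by tauto
  loopless := ⟨by
    rintro ⟨l, hl⟩ (⟨b, hb⟩ | ⟨b, hb⟩) <;>
      simpa using congrArg List.length hb⟩

/-- The root of the binary tree. -/
def treeRoot (n : ℕ) : treeV n := ⟨[], by simp⟩

/-- The midpoint vertex of one of the `k` paths of length 2 replacing the edge
`uv` at the next construction step. -/
def diamMid (ι : Type) {j : ℕ} {u v : diamV ι j} (h : (diamG ι j).Adj u v) (i : ι) :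
    diamV ι (j + 1) :=
  Sum.inr (⟨s(u, v), (diamG ι j).mem_edgeSet.mpr h⟩, i)

lemma diamMid_adj_left (ι : Type) {j : ℕ} {u v : diamV ι j}
    (h : (diamG ι j).Adj u v) (i : ι) :
    (diamG ι (j + 1)).Adj (Sum.inl u) (diamMid ι h i) := by
  show u ∈ (s(u,v) : Sym2 (diamV ι j))
  exact Sym2.mem_mk_left u v

lemma diamMid_adj_right (ι : Type) {j : ℕ} {u v : diamV ι j}
    (h : (diamG ι j).Adj u v) (i : ι) :
    (diamG ι (j + 1)).Adj (diamMid ι h i) (Sum.inl v) := by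
  show v ∈ (s(u,v) : Sym2 (diamV ι j))
  exact Sym2.mem_mk_right u v

/-- The graph homomorphism of `D_{q,k}` onto the subdiamond of `D_{j+q,k}` that
evolved from the edge `uv` of `D_{j,k}`. Its range is that subdiamond. -/
def subEmbed (ι : Type) {j : ℕ} {u v : diamV ι j} (h : (diamG ι j).Adj u v) :
    (q : ℕ) → (diamG ι q) →g (diamG ι (j + q))
  | 0 =>
    ⟨fun b => bif b then u else v, by
      rintro a b hab
      have hab' : a ≠ b := hab
      cases a <;> cases b
      · exact absurd rfl hab'
      · exact h.symm
      · exact h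
      · exact absurd rfl hab'⟩
  | q + 1 =>
    let f := subEmbed ι h q
    ⟨Sum.map f (fun p => (f.mapEdgeSet p.1, p.2)), by
      rintro (a | e) (b | e') hab <;> try exact hab.elim
      · show f a ∈ (Sym2.map f e'.1.1 : Sym2 (diamV ι (j + q)))
        exact Sym2.mem_map.mpr ⟨_, hab, rfl⟩
      · show f b ∈ (Sym2.map f e.1.1 : Sym2 (diamV ι (j + q)))
        exact Sym2.mem_map.mpr ⟨_, hab, rfl⟩⟩

section Aux

open SimpleGraph

variable {ι : Type}

lemma diam_adj_cases {t : ℕ} {x y : diamV ι (t+1)} (h : (diamG ι (t+1)).Adj x y) :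
    (∃ u z, x = Sum.inl u ∧ y = Sum.inr z ∧ u ∈ z.1.1) ∨
    (∃ u z, x = Sum.inr z ∧ y = Sum.inl u ∧ u ∈ z.1.1) := by
  match x, y with
  | Sum.inl u, Sum.inl v => exact (h : False).elim
  | Sum.inl u, Sum.inr z => exact Or.inl ⟨u, z, rfl, rfl, h⟩
  | Sum.inr z, Sum.inl u => exact Or.inr ⟨u, z, rfl, rfl, h⟩
  | Sum.inr z, Sum.inr w => exact (h : False).elim

lemma adj_inl_inr {t : ℕ} {u : diamV ι t} {z : (diamG ι t).edgeSet × ι}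
    (hu : u ∈ z.1.1) : (diamG ι (t+1)).Adj (Sum.inl u) (Sum.inr z) := hu

lemma edge_shape {t : ℕ} {e : Sym2 (diamV ι (t+1))} (he : e ∈ (diamG ι (t+1)).edgeSet) :
    ∃ u z, e = s(Sum.inl u, Sum.inr z) ∧ u ∈ z.1.1 := by
  induction e using Sym2.ind with
  | _ x y =>
    rw [SimpleGraph.mem_edgeSet] at he
    rcases diam_adj_cases he with ⟨u, z, rfl, rfl, hm⟩ | ⟨u, z, rfl, rfl, hm⟩
    · exact ⟨u, z, rfl, hm⟩
    · exact ⟨u, z, Sym2.eq_swap, hm⟩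

lemma exists_adj [Nonempty ι] : ∀ (t : ℕ) (x : diamV ι t), ∃ y, (diamG ι t).Adj x y
  | 0, x => by
      have h : x ≠ !x := by cases x <;> intro hc <;> cases hc
      exact ⟨!x, h⟩
  | (t+1), Sum.inl u => by
      obtain ⟨v, hv⟩ := exists_adj t u
      exact ⟨Sum.inr (⟨s(u,v), hv⟩, Classical.arbitrary ι),
        adj_inl_inr (Sym2.mem_mk_left u v)⟩
  | (t+1), Sum.inr z => by
      obtain ⟨⟨e, he⟩, i⟩ := z
      induction e using Sym2.ind with
      | _ a b =>
        exact ⟨Sum.inl a, (adj_inl_inr (Sym2.mem_mk_left a b)).symm⟩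

/-- Double a walk into the next level. -/
noncomputable def doubleWalk [Nonempty ι] {t : ℕ} :
    {x y : diamV ι t} → (diamG ι t).Walk x y →
    (diamG ι (t+1)).Walk (Sum.inl x) (Sum.inl y)
  | _, _, SimpleGraph.Walk.nil => SimpleGraph.Walk.nil
  | _, _, SimpleGraph.Walk.cons h W =>
      SimpleGraph.Walk.cons (diamMid_adj_left ι h (Classical.arbitrary ι))
        (SimpleGraph.Walk.cons (diamMid_adj_right ι h (Classical.arbitrary ι)) (doubleWalk W))

lemma doubleWalk_length [Nonempty ι] {t : ℕ} {x y : diamV ι t} (W : (diamG ι t).Walk x y) :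
    (doubleWalk W).length = 2 * W.length := by
  induction W with
  | nil => rfl
  | cons h W ih =>
      have hrfl : doubleWalk (SimpleGraph.Walk.cons h W) =
          SimpleGraph.Walk.cons (diamMid_adj_left ι h (Classical.arbitrary ι))
            (SimpleGraph.Walk.cons (diamMid_adj_right ι h (Classical.arbitrary ι))
              (doubleWalk W)) := rfl
      rw [hrfl]
      show (doubleWalk W).length + 1 + 1 = 2 * (W.length + 1)
      rw [ih]
      omega

lemma diam_connected [Nonempty ι] : ∀ t, (diamG ι t).Connected
  | 0 => by
      rw [SimpleGraph.connected_iff]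
      refine ⟨fun a b => ?_, ⟨(false : Bool)⟩⟩
      rcases eq_or_ne a b with rfl | h
      · exact SimpleGraph.Reachable.refl a
      · exact SimpleGraph.Adj.reachable h
  | (t+1) => by
      have hc := diam_connected t
      have key : ∀ x : diamV ι (t+1), ∃ u : diamV ι t,
          (diamG ι (t+1)).Reachable x (Sum.inl u) := by
        rintro (u | z)
        · exact ⟨u, SimpleGraph.Reachable.refl _⟩
        · obtain ⟨⟨e, he⟩, i⟩ := z
          induction e using Sym2.ind with
          | _ a b =>
            exact ⟨a, ((adj_inl_inr (Sym2.mem_mk_left a b)).symm :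
              (diamG ι (t+1)).Adj _ _).reachable⟩
      rw [SimpleGraph.connected_iff]
      refine ⟨fun x y => ?_, hc.nonempty.elim fun a => ⟨Sum.inl a⟩⟩
      obtain ⟨u, hu⟩ := key x
      obtain ⟨v, hv⟩ := key y
      obtain ⟨W⟩ := hc.preconnected u v
      exact hu.trans ((doubleWalk W).reachable.trans hv.symm)

lemma hom_dist_le {V W : Type} {G : SimpleGraph V} {H : SimpleGraph W} (f : G →g H)
    (hG : G.Connected) (x y : V) : H.dist (f x) (f y) ≤ G.dist x y := by
  obtain ⟨W, hW⟩ := hG.exists_walk_length_eq_dist x y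
  calc H.dist (f x) (f y) ≤ (W.map f).length := SimpleGraph.dist_le _
    _ = G.dist x y := by rw [SimpleGraph.Walk.length_map, hW]

lemma dist_le_one_of_mem_edge {t : ℕ} {e : (diamG ι t).edgeSet} {x y : diamV ι t}
    (hx : x ∈ e.1) (hy : y ∈ e.1) : (diamG ι t).dist x y ≤ 1 := by
  obtain ⟨e, he⟩ := e
  induction e using Sym2.ind with
  | _ a b =>
    rw [SimpleGraph.mem_edgeSet] at he
    simp only [Sym2.mem_iff] at hx hy
    rcases hx with rfl | rfl <;> rcases hy with rfl | rfl
    · rw [SimpleGraph.dist_self]; omega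
    · exact SimpleGraph.dist_le he.toWalk
    · exact SimpleGraph.dist_le he.symm.toWalk
    · rw [SimpleGraph.dist_self]; omega

lemma two_dist_le_walk_length [Nonempty ι] {t : ℕ} :
    ∀ (L : ℕ) {x y : diamV ι t} (W : (diamG ι (t+1)).Walk (Sum.inl x) (Sum.inl y)),
      W.length ≤ L → 2 * (diamG ι t).dist x y ≤ W.length := by
  intro L
  induction L using Nat.strong_induction_on with
  | _ L ih =>
    intro x y W hWL
    cases W with
    | nil => rw [SimpleGraph.dist_self]; simp
    | cons h W' =>
      rcases diam_adj_cases h with ⟨u, z, hxu, rfl, hm⟩ | ⟨u, z, hx, _, _⟩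
      · cases W' with
        | cons h' W'' =>
          rcases diam_adj_cases h' with ⟨u', z', h1, h2, hm'⟩ | ⟨u', z', hz, rfl, hm'⟩
          · exact absurd h1 (by simp)
          · have hz' : z = z' := Sum.inr.inj hz
            subst hz'
            have hxu' : x = u := by injection hxu
            subst hxu'
            have hd : (diamG ι t).dist x u' ≤ 1 := dist_le_one_of_mem_edge hm hm'
            change W''.length + 1 + 1 ≤ L at hWL
            change 2 * (diamG ι t).dist x y ≤ W''.length + 1 + 1
            have hih : 2 * (diamG ι t).dist u' y ≤ W''.length :=
              ih (W''.length) (by omega) W'' le_rfl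
            have htri := (diam_connected (ι := ι) t).dist_triangle
              (u := x) (v := u') (w := y)
            omega
      · exact absurd hx (by simp)

lemma dist_inl [Nonempty ι] {t : ℕ} (x y : diamV ι t) :
    (diamG ι (t+1)).dist (Sum.inl x) (Sum.inl y) = 2 * (diamG ι t).dist x y := by
  refine le_antisymm ?_ ?_
  · obtain ⟨W, hW⟩ := (diam_connected (ι := ι) t).exists_walk_length_eq_dist x y
    calc (diamG ι (t+1)).dist (Sum.inl x) (Sum.inl y) ≤ (doubleWalk W).length :=
          SimpleGraph.dist_le _
      _ = 2 * (diamG ι t).dist x y := by rw [doubleWalk_length, hW]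
  · obtain ⟨W, hW⟩ := (diam_connected (ι := ι) (t+1)).exists_walk_length_eq_dist
      (Sum.inl x) (Sum.inl y)
    rw [← hW]
    exact two_dist_le_walk_length W.length W le_rfl

lemma dist_lift [Nonempty ι] (t : ℕ) : ∀ (q : ℕ) (x y : diamV ι t),
    (diamG ι (t+q)).dist (diamLift ι t q x) (diamLift ι t q y)
      = 2^q * (diamG ι t).dist x y
  | 0, x, y => by simp [diamLift]
  | (q+1), x, y => by
      show (diamG ι ((t+q)+1)).dist (Sum.inl (diamLift ι t q x))
        (Sum.inl (diamLift ι t q y)) = _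
      rw [dist_inl, dist_lift t q]
      ring

end Aux
section Aux2

open SimpleGraph

variable {ι : Type}

/-- Height function on the diamond. -/
def diamHt : (t : ℕ) → diamV ι t → ℕ
  | 0, b => cond b 1 0
  | (t+1), Sum.inl u => 2 * diamHt t u
  | (t+1), Sum.inr z =>
      Sym2.lift ⟨fun a b => diamHt t a + diamHt t b, fun a b => Nat.add_comm _ _⟩ z.1.1

lemma diamHt_le : ∀ (t : ℕ) (x : diamV ι t), diamHt t x ≤ 2^t
  | 0, b => by cases b <;> simp [diamHt]
  | (t+1), Sum.inl u => by
      have := diamHt_le t u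
      simp only [diamHt, pow_succ]
      omega
  | (t+1), Sum.inr z => by
      obtain ⟨⟨e, he⟩, i⟩ := z
      induction e using Sym2.ind with
      | _ a b =>
        have ha := diamHt_le t a
        have hb := diamHt_le t b
        simp only [diamHt, Sym2.lift_mk, pow_succ]
        omega

lemma adj_diamHt : ∀ (t : ℕ) {x y : diamV ι t}, (diamG ι t).Adj x y →
    diamHt t x + 1 = diamHt t y ∨ diamHt t y + 1 = diamHt t x
  | 0, x, y, h => by
      have hxy : x ≠ y := h.ne
      cases x <;> cases y <;> simp [diamHt] at hxy ⊢ <;> exact hxy rfl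
  | (t+1), x, y, h => by
      rcases diam_adj_cases h with ⟨u, z, rfl, rfl, hm⟩ | ⟨u, z, rfl, rfl, hm⟩ <;>
      · obtain ⟨⟨e, he⟩, i⟩ := z
        induction e using Sym2.ind with
        | _ a b =>
          rw [SimpleGraph.mem_edgeSet] at he
          have hab := adj_diamHt t he
          simp only [Sym2.mem_iff] at hm
          simp only [diamHt, Sym2.lift_mk]
          rcases hm with rfl | rfl <;> omega

lemma dist_bot_le : ∀ (t : ℕ) [Nonempty ι] (x : diamV ι t),
    (diamG ι t).dist x (diamBottom ι t) ≤ diamHt t x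
  | 0, _, b => by
      cases b
      · exact (le_of_eq (SimpleGraph.dist_self (G := diamG ι 0) (v := diamBottom ι 0))).trans (Nat.zero_le _)
      · have hadj : (diamG ι 0).Adj true false := fun h => Bool.noConfusion h
        exact SimpleGraph.dist_le hadj.toWalk
  | (t+1), _, Sum.inl u => by
      have h1 := dist_bot_le t u
      have h2 : (diamBottom ι (t+1)) = Sum.inl (diamBottom ι t) := rfl
      rw [h2]
      calc (diamG ι (t+1)).dist (Sum.inl u) (Sum.inl (diamBottom ι t))
          = 2 * (diamG ι t).dist u (diamBottom ι t) := dist_inl _ _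
        _ ≤ 2 * diamHt t u := by omega
        _ = diamHt (t+1) (Sum.inl u) := rfl
  | (t+1), _, Sum.inr z => by
      obtain ⟨⟨e, he⟩, i⟩ := z
      induction e using Sym2.ind with
      | _ a b =>
        rw [SimpleGraph.mem_edgeSet] at he
        have hconn := diam_connected (ι := ι) (t+1)
        have h2 : (diamBottom ι (t+1)) = Sum.inl (diamBottom ι t) := rfl
        have hstep : ∀ c : diamV ι t, c ∈ (s(a,b) : Sym2 (diamV ι t)) →
            (diamG ι (t+1)).dist (Sum.inr (⟨s(a,b), he⟩, i)) (diamBottom ι (t+1))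
              ≤ 1 + 2 * diamHt t c := by
          intro c hc
          have hadj : (diamG ι (t+1)).Adj (Sum.inr (⟨s(a,b), he⟩, i)) (Sum.inl c) :=
            (adj_inl_inr (z := (⟨s(a,b), he⟩, i)) hc).symm
          calc (diamG ι (t+1)).dist (Sum.inr (⟨s(a,b), he⟩, i)) (diamBottom ι (t+1))
              ≤ (diamG ι (t+1)).dist (Sum.inr (⟨s(a,b), he⟩, i)) (Sum.inl c)
                + (diamG ι (t+1)).dist (Sum.inl c) (diamBottom ι (t+1)) :=
                hconn.dist_triangle
            _ ≤ 1 + 2 * diamHt t c := by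
                have hd1 : (diamG ι (t+1)).dist (Sum.inr (⟨s(a,b), he⟩, i)) (Sum.inl c) ≤ 1 :=
                  SimpleGraph.dist_le hadj.toWalk
                have hd2 : (diamG ι (t+1)).dist (Sum.inl c) (diamBottom ι (t+1))
                    ≤ 2 * diamHt t c := by
                  rw [h2, dist_inl]
                  have := dist_bot_le t c
                  omega
                omega
        have hA := hstep a (Sym2.mem_mk_left a b)
        have hB := hstep b (Sym2.mem_mk_right a b)
        have hadj2 := adj_diamHt t he
        simp only [diamHt, Sym2.lift_mk]
        omega

lemma dist_top_le : ∀ (t : ℕ) [Nonempty ι] (x : diamV ι t),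
    (diamG ι t).dist x (diamTop ι t) + diamHt t x ≤ 2^t
  | 0, _, b => by
      cases b
      · have hadj : (diamG ι 0).Adj false true := fun h => Bool.noConfusion h
        have h1 := SimpleGraph.dist_le (G := diamG ι 0) hadj.toWalk
        have h0 : hadj.toWalk.length = 1 := rfl
        show (diamG ι 0).dist false true + diamHt 0 false ≤ 2^0
        have h2 : diamHt (ι := ι) 0 false = 0 := rfl
        omega
      · have h0 : (diamG ι 0).dist (diamTop ι 0) (diamTop ι 0) = 0 := SimpleGraph.dist_self
        have h2 : diamHt (ι := ι) 0 true = 1 := rfl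
        change (diamG ι 0).dist (diamTop ι 0) (diamTop ι 0) + diamHt 0 true ≤ 2^0
        omega
  | (t+1), _, Sum.inl u => by
      have h1 := dist_top_le t u
      have h2 : (diamTop ι (t+1)) = Sum.inl (diamTop ι t) := rfl
      rw [h2]
      have h3 := dist_inl (ι := ι) u (diamTop ι t)
      show _ + diamHt (t+1) (Sum.inl u) ≤ _
      simp only [diamHt, h3, pow_succ]
      omega
  | (t+1), _, Sum.inr z => by
      obtain ⟨⟨e, he⟩, i⟩ := z
      induction e using Sym2.ind with
      | _ a b =>
        rw [SimpleGraph.mem_edgeSet] at he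
        have hconn := diam_connected (ι := ι) (t+1)
        have h2 : (diamTop ι (t+1)) = Sum.inl (diamTop ι t) := rfl
        have hstep : ∀ c : diamV ι t, c ∈ (s(a,b) : Sym2 (diamV ι t)) →
            (diamG ι (t+1)).dist (Sum.inr (⟨s(a,b), he⟩, i)) (diamTop ι (t+1))
              ≤ 1 + 2 * (diamG ι t).dist c (diamTop ι t) := by
          intro c hc
          have hadj : (diamG ι (t+1)).Adj (Sum.inr (⟨s(a,b), he⟩, i)) (Sum.inl c) :=
            (adj_inl_inr (z := (⟨s(a,b), he⟩, i)) hc).symm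
          calc (diamG ι (t+1)).dist (Sum.inr (⟨s(a,b), he⟩, i)) (diamTop ι (t+1))
              ≤ (diamG ι (t+1)).dist (Sum.inr (⟨s(a,b), he⟩, i)) (Sum.inl c)
                + (diamG ι (t+1)).dist (Sum.inl c) (diamTop ι (t+1)) := hconn.dist_triangle
            _ ≤ 1 + 2 * (diamG ι t).dist c (diamTop ι t) := by
                have hd1 : (diamG ι (t+1)).dist (Sum.inr (⟨s(a,b), he⟩, i)) (Sum.inl c) ≤ 1 :=
                  SimpleGraph.dist_le hadj.toWalk
                have hd2 : (diamG ι (t+1)).dist (Sum.inl c) (diamTop ι (t+1))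
                    = 2 * (diamG ι t).dist c (diamTop ι t) := by rw [h2, dist_inl]
                omega
        have hA := hstep a (Sym2.mem_mk_left a b)
        have hB := hstep b (Sym2.mem_mk_right a b)
        have hta := dist_top_le t a
        have htb := dist_top_le t b
        have hadj2 := adj_diamHt t he
        simp only [diamHt, Sym2.lift_mk, pow_succ]
        omega

/-- Diameter of the diamond. -/
lemma diam_dist_le [Nonempty ι] (t : ℕ) (x y : diamV ι t) :
    (diamG ι t).dist x y ≤ 2^t := by
  have hconn := diam_connected (ι := ι) t
  have h1 : (diamG ι t).dist x y ≤
      (diamG ι t).dist x (diamBottom ι t) + (diamG ι t).dist (diamBottom ι t) y :=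
    hconn.dist_triangle
  have h2 : (diamG ι t).dist x y ≤
      (diamG ι t).dist x (diamTop ι t) + (diamG ι t).dist (diamTop ι t) y :=
    hconn.dist_triangle
  have hb1 := dist_bot_le t x
  have hb2 := dist_bot_le t y
  have ht1 := dist_top_le t x
  have ht2 := dist_top_le t y
  rw [SimpleGraph.dist_comm (u := diamBottom ι t) (v := y)] at h1
  rw [SimpleGraph.dist_comm (u := diamTop ι t) (v := y)] at h2
  omega

end Aux2
section Aux3

open SimpleGraph

variable {ι : Type}

lemma sym2_edge_rep {V : Type} {G : SimpleGraph V} {e : Sym2 V} (he : e ∈ G.edgeSet) :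
    ∃ a b, e = s(a, b) ∧ G.Adj a b := by
  induction e using Sym2.ind with
  | _ a b => exact ⟨a, b, rfl, (SimpleGraph.mem_edgeSet _).mp he⟩

lemma subEmbed_inl {t : ℕ} {u v : diamV ι t} (h : (diamG ι t).Adj u v) (q : ℕ)
    (x : diamV ι q) :
    subEmbed ι h (q+1) (Sum.inl x) = Sum.inl (subEmbed ι h q x) := rfl

lemma subEmbed_inr {t : ℕ} {u v : diamV ι t} (h : (diamG ι t).Adj u v) (q : ℕ)
    (p : (diamG ι q).edgeSet) (i : ι) :
    subEmbed ι h (q+1) (Sum.inr (p, i)) = Sum.inr ((subEmbed ι h q).mapEdgeSet p, i) := rfl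

lemma subEmbed_zero {t : ℕ} {u v : diamV ι t} (h : (diamG ι t).Adj u v) (b : Bool) :
    subEmbed ι h 0 b = bif b then u else v := rfl

/-- The flip automorphism of the diamond. -/
def diamFlipHom : (q : ℕ) → (diamG ι q) →g (diamG ι q)
  | 0 => ⟨fun b => !b, fun {a b} hab => by
      cases a <;> cases b <;>
        first
          | exact ((hab : _ ≠ _) rfl).elim
          | exact fun hc => Bool.noConfusion hc⟩
  | (q+1) =>
      let f := diamFlipHom q
      ⟨Sum.map f (fun p => (f.mapEdgeSet p.1, p.2)), by
        rintro (a | e) (b | e') hab <;> try exact hab.elim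
        · show f a ∈ (Sym2.map f e'.1.1 : Sym2 (diamV ι q))
          exact Sym2.mem_map.mpr ⟨_, hab, rfl⟩
        · show f b ∈ (Sym2.map f e.1.1 : Sym2 (diamV ι q))
          exact Sym2.mem_map.mpr ⟨_, hab, rfl⟩⟩

lemma subEmbed_flip : ∀ (q : ℕ) (x : diamV ι q) {t : ℕ} {u v : diamV ι t}
    (h : (diamG ι t).Adj u v),
    subEmbed ι h.symm q x = subEmbed ι h q (diamFlipHom q x)
  | 0, b, t, u, v, h => by cases b <;> rfl
  | (q+1), Sum.inl x, t, u, v, h => by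
      have := subEmbed_flip q x h
      show Sum.inl (subEmbed ι h.symm q x) = _
      rw [this]
      rfl
  | (q+1), Sum.inr z, t, u, v, h => by
      obtain ⟨⟨E, hE⟩, i⟩ := z
      have hmap : Sym2.map (subEmbed ι h.symm q) E
          = Sym2.map (subEmbed ι h q) (Sym2.map (diamFlipHom q) E) := by
        rw [Sym2.map_map]
        induction E using Sym2.ind with
        | _ a b =>
          rw [Sym2.map_pair_eq, Sym2.map_pair_eq, subEmbed_flip q a h, subEmbed_flip q b h]
          rfl
      show Sum.inr ((subEmbed ι h.symm q).mapEdgeSet ⟨E, hE⟩, i) = _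
      have h5 : (diamFlipHom (q+1)) (Sum.inr (⟨E, hE⟩, i))
          = Sum.inr ((diamFlipHom q).mapEdgeSet ⟨E, hE⟩, i) := rfl
      rw [h5, subEmbed_inr]
      have hEq : (subEmbed ι h.symm q).mapEdgeSet ⟨E, hE⟩
          = (subEmbed ι h q).mapEdgeSet ((diamFlipHom q).mapEdgeSet ⟨E, hE⟩) :=
        Subtype.ext hmap
      rw [hEq]

lemma diamFlip_flip : ∀ (q : ℕ) (x : diamV ι q), diamFlipHom q (diamFlipHom q x) = x
  | 0, b => Bool.not_not b
  | (q+1), Sum.inl x => by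
      show Sum.inl (diamFlipHom q (diamFlipHom q x)) = Sum.inl x
      rw [diamFlip_flip q x]
  | (q+1), Sum.inr z => by
      obtain ⟨⟨E, hE⟩, i⟩ := z
      show Sum.inr ((diamFlipHom q).mapEdgeSet ((diamFlipHom q).mapEdgeSet ⟨E, hE⟩), i)
        = Sum.inr (⟨E, hE⟩, i)
      have hEq : (diamFlipHom q).mapEdgeSet ((diamFlipHom q).mapEdgeSet ⟨E, hE⟩) = ⟨E, hE⟩ := by
        refine Subtype.ext ?_
        show Sym2.map (diamFlipHom q) (Sym2.map (diamFlipHom q) E) = E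
        rw [Sym2.map_map]
        induction E using Sym2.ind with
        | _ a b =>
          show s((diamFlipHom q) ((diamFlipHom q) a), (diamFlipHom q) ((diamFlipHom q) b)) = _
          rw [diamFlip_flip q a, diamFlip_flip q b]
      rw [hEq]

lemma range_symm {t : ℕ} {u v : diamV ι t} (h : (diamG ι t).Adj u v) (q : ℕ) :
    Set.range (subEmbed ι h.symm q) = Set.range (subEmbed ι h q) := by
  ext y
  constructor
  · rintro ⟨x, rfl⟩
    exact ⟨diamFlipHom q x, (subEmbed_flip q x h).symm⟩
  · rintro ⟨x, rfl⟩
    refine ⟨diamFlipHom q x, ?_⟩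
    rw [subEmbed_flip q (diamFlipHom q x) h, diamFlip_flip]

lemma range_sym2 {t : ℕ} {u₁ v₁ u₂ v₂ : diamV ι t} (h₁ : (diamG ι t).Adj u₁ v₁)
    (h₂ : (diamG ι t).Adj u₂ v₂) (hs : s(u₁, v₁) = s(u₂, v₂)) (q : ℕ) :
    Set.range (subEmbed ι h₁ q) = Set.range (subEmbed ι h₂ q) := by
  rw [Sym2.eq_iff] at hs
  rcases hs with ⟨rfl, rfl⟩ | ⟨rfl, rfl⟩
  · have : h₁ = h₂ := rfl
    rw [this]
  · have : h₂ = h₁.symm := rfl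
    rw [this, range_symm]

lemma subEmbed_corner {t : ℕ} {u v : diamV ι t} (h : (diamG ι t).Adj u v) :
    ∀ (q : ℕ) (b : Bool),
      subEmbed ι h q (diamOrig ι q b) = diamLift ι t q (bif b then u else v)
  | 0, b => rfl
  | (q+1), b => by
      show Sum.inl (subEmbed ι h q (diamOrig ι q b)) = Sum.inl _
      rw [subEmbed_corner h q b]

lemma subEmbed_eq_lift {t : ℕ} {u v : diamV ι t} (h : (diamG ι t).Adj u v) :
    ∀ (q : ℕ) (x : diamV ι q) (z : diamV ι t),
      subEmbed ι h q x = diamLift ι t q z →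
      ∃ b : Bool, x = diamOrig ι q b ∧ z = (bif b then u else v)
  | 0, x, z, hx => ⟨x, rfl, hx.symm⟩
  | (q+1), Sum.inl x, z, hx => by
      have hx' : subEmbed ι h q x = diamLift ι t q z := by
        have := hx
        rw [subEmbed_inl] at this
        exact Sum.inl.inj this
      obtain ⟨b, hb1, hb2⟩ := subEmbed_eq_lift h q x z hx'
      exact ⟨b, by rw [hb1]; rfl, hb2⟩
  | (q+1), Sum.inr z', z, hx => by
      obtain ⟨p, i⟩ := z'
      rw [subEmbed_inr] at hx
      exact nomatch hx

lemma cover_edge [Nonempty ι] (t : ℕ) : ∀ (q : ℕ) (E : Sym2 (diamV ι (t+q))),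
    E ∈ (diamG ι (t+q)).edgeSet →
    ∃ (u v : diamV ι t) (h : (diamG ι t).Adj u v) (E₀ : Sym2 (diamV ι q)),
      E₀ ∈ (diamG ι q).edgeSet ∧ E = Sym2.map (subEmbed ι h q) E₀
  | 0, E, hE => by
      obtain ⟨a, b, rfl, hab⟩ := sym2_edge_rep hE
      refine ⟨a, b, hab, s(true, false), ?_, ?_⟩
      · exact (SimpleGraph.mem_edgeSet _).mpr (fun hc => Bool.noConfusion hc)
      · rfl
  | (q+1), E, hE => by
      obtain ⟨a, z, rfl, ham⟩ := edge_shape hE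
      obtain ⟨E', i⟩ := z
      obtain ⟨u, v, h, E₀, hE₀, hmap⟩ := cover_edge t q E'.1 E'.2
      have ham' : a ∈ Sym2.map (subEmbed ι h q) E₀ := by rw [← hmap]; exact ham
      obtain ⟨a₀, ha₀, ha₀'⟩ := Sym2.mem_map.mp ham'
      refine ⟨u, v, h, s(Sum.inl a₀, Sum.inr (⟨E₀, hE₀⟩, i)), ?_, ?_⟩
      · exact (SimpleGraph.mem_edgeSet _).mpr (adj_inl_inr (z := (⟨E₀, hE₀⟩, i)) ha₀)
      · have hEq : (⟨E₀, hE₀⟩ : (diamG ι q).edgeSet).1.map (subEmbed ι h q) = E'.1 := hmap.symm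
        have hEq2 : (subEmbed ι h q).mapEdgeSet ⟨E₀, hE₀⟩ = E' := Subtype.ext hmap.symm
        have e1 : subEmbed ι h (q+1) (Sum.inl a₀) = Sum.inl a := by
          rw [subEmbed_inl]; exact congrArg Sum.inl ha₀'
        have e2 : subEmbed ι h (q+1) (Sum.inr (⟨E₀, hE₀⟩, i)) = Sum.inr (E', i) := by
          rw [subEmbed_inr]; exact congrArg (fun w => Sum.inr (w, i)) hEq2
        exact ((Sym2.map_pair_eq ..).trans (congrArg₂ (fun x y => s(x, y)) e1 e2)).symm

lemma cover_vertex [Nonempty ι] (t : ℕ) : ∀ (q : ℕ) (x : diamV ι (t+q)),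
    ∃ (u v : diamV ι t) (h : (diamG ι t).Adj u v), x ∈ Set.range (subEmbed ι h q)
  | 0, x => by
      obtain ⟨y, hy⟩ := exists_adj t x
      exact ⟨x, y, hy, true, rfl⟩
  | (q+1), Sum.inl x => by
      obtain ⟨u, v, h, x₀, hx₀⟩ := cover_vertex t q x
      exact ⟨u, v, h, Sum.inl x₀, by rw [subEmbed_inl, hx₀]⟩
  | (q+1), Sum.inr z => by
      obtain ⟨E', i⟩ := z
      obtain ⟨u, v, h, E₀, hE₀, hmap⟩ := cover_edge t q E'.1 E'.2
      refine ⟨u, v, h, Sum.inr (⟨E₀, hE₀⟩, i), ?_⟩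
      rw [subEmbed_inr]
      have hEq2 : (subEmbed ι h q).mapEdgeSet ⟨E₀, hE₀⟩ = E' := Subtype.ext hmap.symm
      rw [hEq2]

lemma subEmbed_inter {t : ℕ} {u₁ v₁ u₂ v₂ : diamV ι t} (h₁ : (diamG ι t).Adj u₁ v₁)
    (h₂ : (diamG ι t).Adj u₂ v₂) (hne : s(u₁, v₁) ≠ s(u₂, v₂)) :
    ∀ (q : ℕ) (x y : diamV ι q), subEmbed ι h₁ q x = subEmbed ι h₂ q y →
      ∃ z, subEmbed ι h₁ q x = diamLift ι t q z ∧ z ∈ s(u₁, v₁) ∧ z ∈ s(u₂, v₂) := by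
  intro q
  induction q with
  | zero =>
      intro x y hxy
      refine ⟨subEmbed ι h₁ 0 x, rfl, ?_, ?_⟩
      · rw [Sym2.mem_iff]
        cases x
        · exact Or.inr rfl
        · exact Or.inl rfl
      · rw [hxy, Sym2.mem_iff]
        cases y
        · exact Or.inr rfl
        · exact Or.inl rfl
  | succ q ih =>
      intro x y hxy
      match x, y with
      | Sum.inl x', Sum.inl y' =>
          rw [subEmbed_inl, subEmbed_inl] at hxy
          obtain ⟨z, hz1, hz2, hz3⟩ := ih x' y' (Sum.inl.inj hxy)
          refine ⟨z, ?_, hz2, hz3⟩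
          rw [subEmbed_inl, hz1]
          rfl
      | Sum.inl x', Sum.inr y' =>
          obtain ⟨p, i⟩ := y'
          rw [subEmbed_inl, subEmbed_inr] at hxy
          exact nomatch hxy
      | Sum.inr x', Sum.inl y' =>
          obtain ⟨p, i⟩ := x'
          rw [subEmbed_inr, subEmbed_inl] at hxy
          exact nomatch hxy
      | Sum.inr ⟨p₁, i₁⟩, Sum.inr ⟨p₂, i₂⟩ =>
          rw [subEmbed_inr, subEmbed_inr] at hxy
          have hpair := Sum.inr.inj hxy
          have hS : Sym2.map (subEmbed ι h₁ q) p₁.1 = Sym2.map (subEmbed ι h₂ q) p₂.1 :=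
            congrArg (fun w => w.1.1) hpair
          obtain ⟨a, b, hab, hadj⟩ := sym2_edge_rep p₁.2
          rw [hab, Sym2.map_pair_eq] at hS
          have hmema : subEmbed ι h₁ q a ∈ Sym2.map (subEmbed ι h₂ q) p₂.1 := by
            rw [← hS]; exact Sym2.mem_mk_left _ _
          have hmemb : subEmbed ι h₁ q b ∈ Sym2.map (subEmbed ι h₂ q) p₂.1 := by
            rw [← hS]; exact Sym2.mem_mk_right _ _
          obtain ⟨c, _, hc⟩ := Sym2.mem_map.mp hmema
          obtain ⟨c', _, hc'⟩ := Sym2.mem_map.mp hmemb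
          obtain ⟨za, hza1, hza2, hza3⟩ := ih a c hc.symm
          obtain ⟨zb, hzb1, hzb2, hzb3⟩ := ih b c' hc'.symm
          have hadj' : (diamG ι (t+q)).Adj (diamLift ι t q za) (diamLift ι t q zb) := by
            rw [← hza1, ← hzb1]
            exact (subEmbed ι h₁ q).map_adj hadj
          exfalso
          match q, hadj' with
          | 0, hadj' =>
              have hne' : za ≠ zb := hadj'.ne
              have e1 : s(u₁, v₁) = s(za, zb) :=
                (Sym2.mem_and_mem_iff hne').mp ⟨hza2, hzb2⟩
              have e2 : s(u₂, v₂) = s(za, zb) :=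
                (Sym2.mem_and_mem_iff hne').mp ⟨hza3, hzb3⟩
              exact hne (e1.trans e2.symm)
          | (q'+1), hadj' => exact (hadj' : False)

end Aux3
section Aux4

open SimpleGraph

variable {ι : Type}

lemma normalize_range [Nonempty ι] {j q : ℕ} {x : diamV ι ((j+1)+q)}
    {u v : diamV ι (j+1)} (h : (diamG ι (j+1)).Adj u v)
    (hx : x ∈ Set.range (subEmbed ι h q)) (u₀ : diamV ι j)
    (hmem : Sum.inl u₀ ∈ (s(u, v) : Sym2 (diamV ι (j+1)))) :
    ∃ (v₀ : diamV ι (j+1)) (h' : (diamG ι (j+1)).Adj (Sum.inl u₀) v₀),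
      x ∈ Set.range (subEmbed ι h' q) := by
  rcases diam_adj_cases h with ⟨u', z, rfl, rfl, hm⟩ | ⟨u', z, rfl, rfl, hm⟩
  · replace hmem := Sym2.mem_iff.mp hmem
    rcases hmem with hh | hh
    · have : u' = u₀ := (Sum.inl.inj hh.symm)
      subst this
      exact ⟨Sum.inr z, h, hx⟩
    · exact nomatch hh
  · replace hmem := Sym2.mem_iff.mp hmem
    rcases hmem with hh | hh
    · exact nomatch hh
    · have : u' = u₀ := (Sum.inl.inj hh.symm)
      subst this
      refine ⟨Sum.inr z, h.symm, ?_⟩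
      rw [← range_symm h.symm q]
      have hss : h.symm.symm = h := rfl
      rw [hss]
      exact hx

lemma inr_mem_normalize [Nonempty ι] {j q : ℕ} {x : diamV ι ((j+1)+q)}
    {u v : diamV ι (j+1)} (h'' : (diamG ι (j+1)).Adj u v)
    (hx : x ∈ Set.range (subEmbed ι h'' q)) (z₀ : (diamG ι j).edgeSet × ι)
    (hmem : Sum.inr z₀ ∈ (s(u, v) : Sym2 (diamV ι (j+1)))) :
    ∃ (c : diamV ι j) (hc : c ∈ z₀.1.1)
      (h₃ : (diamG ι (j+1)).Adj (Sum.inl c) (Sum.inr z₀)),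
      x ∈ Set.range (subEmbed ι h₃ q) := by
  rcases diam_adj_cases h'' with ⟨u', z, rfl, rfl, hm⟩ | ⟨u', z, rfl, rfl, hm⟩
  · replace hmem := Sym2.mem_iff.mp hmem
    rcases hmem with hh | hh
    · exact nomatch hh
    · have : z = z₀ := Sum.inr.inj hh.symm
      subst this
      exact ⟨u', hm, h'', hx⟩
  · replace hmem := Sym2.mem_iff.mp hmem
    rcases hmem with hh | hh
    · have : z = z₀ := Sum.inr.inj hh.symm
      subst this
      refine ⟨u', hm, h''.symm, ?_⟩
      rw [← range_symm h''.symm q]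
      have hss : h''.symm.symm = h'' := rfl
      rw [hss]
      exact hx
    · exact nomatch hh

lemma star_claim [Nonempty ι] {j q : ℕ} {a b : diamV ι ((j+1)+q)}
    (W : (diamG ι ((j+1)+q)).Walk a b)
    (hW : ∀ x ∈ W.support, ∀ z : (diamG ι j).edgeSet × ι,
      x ≠ diamLift ι (j+1) q (Sum.inr z)) :
    ∃ u₀ : diamV ι j, ∀ x ∈ W.support,
      ∃ (v₀ : diamV ι (j+1)) (h : (diamG ι (j+1)).Adj (Sum.inl u₀) v₀),
        x ∈ Set.range (subEmbed ι h q) := by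
  induction W with
  | @nil a =>
      obtain ⟨u, v, h, hx⟩ := cover_vertex (j+1) q a
      rcases diam_adj_cases h with ⟨u', z, huv1, huv2, hm⟩ | ⟨u', z, huv1, huv2, hm⟩
      · refine ⟨u', fun x hxs => ?_⟩
        rw [SimpleGraph.Walk.mem_support_nil_iff] at hxs
        subst hxs
        exact normalize_range h hx u' (by rw [huv1]; exact Sym2.mem_mk_left _ _)
      · refine ⟨u', fun x hxs => ?_⟩
        rw [SimpleGraph.Walk.mem_support_nil_iff] at hxs
        subst hxs
        exact normalize_range h hx u' (by rw [huv2]; exact Sym2.mem_mk_right _ _)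
  | @cons a a' b hadj W' ih =>
      have hW' : ∀ x ∈ W'.support, ∀ z : (diamG ι j).edgeSet × ι,
          x ≠ diamLift ι (j+1) q (Sum.inr z) := by
        intro x hx z
        exact hW x (by rw [SimpleGraph.Walk.support_cons]; exact List.mem_cons_of_mem _ hx) z
      obtain ⟨u₀, hP⟩ := ih hW'
      obtain ⟨v₀, h', hx'⟩ := hP a' W'.start_mem_support
      -- cover the edge (a, a')
      have hE : s(a, a') ∈ (diamG ι ((j+1)+q)).edgeSet := (SimpleGraph.mem_edgeSet _).mpr hadj
      obtain ⟨u, v, h'', E₀, hE₀, hmap⟩ := cover_edge (j+1) q s(a, a') hE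
      have hamem : a ∈ Sym2.map (subEmbed ι h'' q) E₀ := by
        rw [← hmap]; exact Sym2.mem_mk_left _ _
      have ha'mem : a' ∈ Sym2.map (subEmbed ι h'' q) E₀ := by
        rw [← hmap]; exact Sym2.mem_mk_right _ _
      obtain ⟨a₀, _, ha₀⟩ := Sym2.mem_map.mp hamem
      obtain ⟨a₀', _, ha₀'⟩ := Sym2.mem_map.mp ha'mem
      have key : Sum.inl u₀ ∈ (s(u, v) : Sym2 (diamV ι (j+1))) := by
        by_cases hsame : s(Sum.inl u₀, v₀) = s(u, v)
        · rw [← hsame]; exact Sym2.mem_mk_left _ _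
        · obtain ⟨y1, hy1⟩ := hx'
          have ha'sup : a' ∈ (SimpleGraph.Walk.cons hadj W').support := by
            rw [SimpleGraph.Walk.support_cons]
            exact List.mem_cons_of_mem _ W'.start_mem_support
          obtain ⟨zz, hz1, hz2, hz3⟩ := subEmbed_inter h' h'' hsame q y1 a₀'
            (by rw [hy1, ha₀'])
          rw [hy1] at hz1
          rcases zz with c | z₂
          · replace hz2 := Sym2.mem_iff.mp hz2
            rcases hz2 with hh | hh
            · have : c = u₀ := Sum.inl.inj hh
              subst this
              exact hz3
            · exfalso
              rcases diam_adj_cases h' with ⟨u2, z2, hv1, hv2, _⟩ | ⟨u2, z2, hv1, hv2, _⟩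
              · rw [hv2] at hh; exact nomatch hh
              · exact nomatch hv1
          · exact absurd hz1 (hW a' ha'sup z₂)
      refine ⟨u₀, fun x hxs => ?_⟩
      rw [SimpleGraph.Walk.support_cons, List.mem_cons] at hxs
      rcases hxs with rfl | hxs
      · exact normalize_range h'' ⟨a₀, ha₀⟩ u₀ key
      · exact hP x hxs

lemma walk_avoid_dist_le [Nonempty ι] {j q : ℕ} {a b : diamV ι ((j+1)+q)}
    (W : (diamG ι ((j+1)+q)).Walk a b)
    (hW : ∀ x ∈ W.support, ∀ z : (diamG ι j).edgeSet × ι,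
      x ≠ diamLift ι (j+1) q (Sum.inr z)) :
    (diamG ι ((j+1)+q)).dist a b ≤ 2^(q+1) := by
  obtain ⟨u₀, hP⟩ := star_claim W hW
  have hball : ∀ x ∈ W.support,
      (diamG ι ((j+1)+q)).dist x (diamLift ι (j+1) q (Sum.inl u₀)) ≤ 2^q := by
    intro x hx
    obtain ⟨v₀, h', ⟨x₀, hx₀⟩⟩ := hP x hx
    have hcorner : subEmbed ι h' q (diamOrig ι q true) = diamLift ι (j+1) q (Sum.inl u₀) :=
      subEmbed_corner h' q true
    rw [← hcorner, ← hx₀]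
    calc (diamG ι ((j+1)+q)).dist (subEmbed ι h' q x₀) (subEmbed ι h' q (diamOrig ι q true))
        ≤ (diamG ι q).dist x₀ (diamOrig ι q true) :=
          hom_dist_le _ (diam_connected q) _ _
      _ ≤ 2^q := diam_dist_le q _ _
  have h1 := hball a W.start_mem_support
  have h2 := hball b W.end_mem_support
  have htri := (diam_connected (ι := ι) ((j+1)+q)).dist_triangle
    (u := a) (v := diamLift ι (j+1) q (Sum.inl u₀)) (w := b)
  rw [SimpleGraph.dist_comm (u := diamLift ι (j+1) q (Sum.inl u₀)) (v := b)] at htri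
  have : (2:ℕ)^(q+1) = 2^q + 2^q := by ring
  omega

lemma ball_subset [Nonempty ι] {j q : ℕ} (e : (diamG ι j).edgeSet) (i : ι) :
    ∀ (x : diamV ι ((j+1)+q)),
      (diamG ι ((j+1)+q)).dist (diamLift ι (j+1) q (Sum.inr (e, i))) x < 2^q →
      ∃ (bb : diamV ι j) (hbb : bb ∈ e.1)
        (h : (diamG ι (j+1)).Adj (Sum.inl bb) (Sum.inr (e, i))),
        x ∈ Set.range (subEmbed ι h q) := by
  set w := diamLift ι (j+1) q (Sum.inr (e, i)) with hw
  have hconn := diam_connected (ι := ι) ((j+1)+q)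
  suffices main : ∀ N (x : diamV ι ((j+1)+q)), (diamG ι ((j+1)+q)).dist w x = N → N < 2^q →
      ∃ (bb : diamV ι j) (hbb : bb ∈ e.1)
        (h : (diamG ι (j+1)).Adj (Sum.inl bb) (Sum.inr (e, i))),
        x ∈ Set.range (subEmbed ι h q) by
    intro x hx
    exact main _ x rfl hx
  intro N
  induction N using Nat.strong_induction_on with
  | _ N ihN =>
    intro x hdist hlt
    match N, hdist, hlt with
    | 0, hdist, hlt =>
        have hx : w = x := hconn.dist_eq_zero_iff.mp hdist
        obtain ⟨a', b', he', hab'⟩ := sym2_edge_rep e.2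
        have hbm : a' ∈ e.1 := by rw [he']; exact Sym2.mem_mk_left _ _
        have h : (diamG ι (j+1)).Adj (Sum.inl a') (Sum.inr (e, i)) :=
          adj_inl_inr (z := (e, i)) hbm
        refine ⟨a', hbm, h, diamOrig ι q false, ?_⟩
        rw [subEmbed_corner h q false]
        exact hx
    | (N'+1), hdist, hlt =>
        obtain ⟨W, hWlen⟩ := hconn.exists_walk_length_eq_dist w x
        rw [hdist] at hWlen
        rcases hWr : W.reverse with _ | ⟨hadj, W''⟩
        · exfalso
          have := congrArg SimpleGraph.Walk.length hWr
          rw [SimpleGraph.Walk.length_reverse, hWlen] at this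
          exact Nat.noConfusion this
        · -- hadj : Adj x y, W'' : Walk y w
          rename_i y
          have hlen'' : W''.length = N' := by
            have := congrArg SimpleGraph.Walk.length hWr
            rw [SimpleGraph.Walk.length_reverse, hWlen] at this
            simp only [SimpleGraph.Walk.length_cons] at this
            omega
          have hdy : (diamG ι ((j+1)+q)).dist w y ≤ N' := by
            have := SimpleGraph.dist_le W''.reverse
            rw [SimpleGraph.Walk.length_reverse, hlen''] at this
            exact this
          obtain ⟨bb, hbb, h, hyrange⟩ := ihN ((diamG ι ((j+1)+q)).dist w y)
            (by omega) y rfl (by omega)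
          -- cover the edge (x, y)
          have hE : s(x, y) ∈ (diamG ι ((j+1)+q)).edgeSet :=
            (SimpleGraph.mem_edgeSet _).mpr hadj
          obtain ⟨u, v, h'', E₀, hE₀, hmap⟩ := cover_edge (j+1) q s(x, y) hE
          have hxmem : x ∈ Sym2.map (subEmbed ι h'' q) E₀ := by
            rw [← hmap]; exact Sym2.mem_mk_left _ _
          have hymem : y ∈ Sym2.map (subEmbed ι h'' q) E₀ := by
            rw [← hmap]; exact Sym2.mem_mk_right _ _
          obtain ⟨x₀, _, hx₀⟩ := Sym2.mem_map.mp hxmem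
          obtain ⟨y₀, _, hy₀⟩ := Sym2.mem_map.mp hymem
          by_cases hsame : s(Sum.inl bb, Sum.inr (e, i)) = s(u, v)
          · refine ⟨bb, hbb, h, ?_⟩
            rw [← range_sym2 h'' h hsame.symm q]
            exact ⟨x₀, hx₀⟩
          · obtain ⟨y1, hy1⟩ := hyrange
            obtain ⟨zz, hz1, hz2, hz3⟩ := subEmbed_inter h h'' hsame q y1 y₀
              (by rw [hy1, hy₀])
            rw [hy1] at hz1
            rcases zz with c | z₂
            · exfalso
              replace hz2 := Sym2.mem_iff.mp hz2
              have hceq : (Sum.inl c : diamV ι (j+1)) = Sum.inl bb := by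
                rcases hz2 with hh | hh
                · exact hh
                · exact nomatch hh
              rw [hceq] at hz1
              have hdistlift := dist_lift (ι := ι) (j+1) q (Sum.inr (e, i)) (Sum.inl bb)
              have hne2 : (Sum.inr (e, i) : diamV ι (j+1)) ≠ Sum.inl bb :=
                fun hc => nomatch hc
              have hge1 : 1 ≤ (diamG ι (j+1)).dist (Sum.inr (e, i)) (Sum.inl bb) := by
                have := (diam_connected (ι := ι) (j+1)).pos_dist_of_ne hne2
                omega
              have hyw : (diamG ι ((j+1)+q)).dist w y ≥ 2^q := by
                rw [hz1, hw, hdistlift]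
                calc 2^q = 2^q * 1 := by ring
                  _ ≤ _ := Nat.mul_le_mul_left _ hge1
              omega
            · have hz₂ : z₂ = (e, i) := by
                replace hz2 := Sym2.mem_iff.mp hz2
                rcases hz2 with hh | hh
                · exact nomatch hh
                · exact (Sum.inr.inj hh)
              subst hz₂
              obtain ⟨c, hc, h₃, hxr⟩ := inr_mem_normalize h'' ⟨x₀, hx₀⟩ (e, i) hz3
              exact ⟨c, hc, h₃, hxr⟩

end Aux4
section Aux5

open SimpleGraph

variable {ι : Type}

lemma subEmbed_congr {t q : ℕ} {u u' v : diamV ι t} (huu : u = u')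
    (h : (diamG ι t).Adj u v) (h' : (diamG ι t).Adj u' v) (x : diamV ι q) :
    subEmbed ι h q x = subEmbed ι h' q x := by
  subst huu
  rfl

lemma diam_finite [Finite ι] : ∀ t, Finite (diamV ι t)
  | 0 => by show Finite Bool; infer_instance
  | (t+1) => by
      have : Finite (diamV ι t) := diam_finite t
      have : Finite (Sym2 (diamV ι t)) := Quot.finite _
      show Finite ((diamV ι t) ⊕ ((diamG ι t).edgeSet × ι))
      infer_instance

lemma edge0_eq (E : (diamG ι 0).edgeSet) : E.1 = s(true, false) := by
  obtain ⟨a, b, hab, hadj⟩ := sym2_edge_rep E.2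
  have hne : a ≠ b := hadj.ne
  match a, b, hne with
  | true, false, _ => exact hab
  | false, true, _ => exact hab.trans Sym2.eq_swap
  | true, true, hne => exact (hne rfl).elim
  | false, false, hne => exact (hne rfl).elim

lemma edge_card_le [Finite ι] : ∀ t : ℕ, Nat.card (diamG ι t).edgeSet ≤ (2 * Nat.card ι)^t := by
  intro t
  induction t with
  | zero =>
      have hinj : Function.Injective (fun _ : (diamG ι 0).edgeSet => ()) := by
        intro e₁ e₂ _
        exact Subtype.ext ((edge0_eq e₁).trans (edge0_eq e₂).symm)
      calc Nat.card (diamG ι 0).edgeSet ≤ Nat.card Unit :=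
            Nat.card_le_card_of_injective _ hinj
        _ = 1 := Nat.card_unique
        _ ≤ (2 * Nat.card ι)^0 := by simp
  | succ t ih =>
      classical
      have hfin : Finite (diamV ι t) := diam_finite t
      have hfinS : Finite (Sym2 (diamV ι t)) := Quot.finite _
      have spec : ∀ E : (diamG ι (t+1)).edgeSet,
          ∃ (u : diamV ι t) (z : (diamG ι t).edgeSet × ι),
            E.1 = s(Sum.inl u, Sum.inr z) ∧ u ∈ z.1.1 := by
        intro E
        obtain ⟨u, z, h, hm⟩ := edge_shape E.2
        exact ⟨u, z, h, hm⟩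
      choose fu fz hspec hmem using spec
      have hrep : ∀ z : Sym2 (diamV ι t), ∃ pq : (diamV ι t) × (diamV ι t),
          z = s(pq.1, pq.2) := by
        intro z
        induction z using Sym2.ind with
        | _ a b => exact ⟨(a, b), rfl⟩
      choose rep hrep using hrep
      set F : (diamG ι (t+1)).edgeSet → ((diamG ι t).edgeSet × ι) × Bool :=
        fun E => (fz E, decide (fu E = (rep (fz E).1.1).1)) with hFdef
      have hinj : Function.Injective F := by
        intro E E' hEE
        have hz : fz E = fz E' := congrArg Prod.fst hEE
        have hb : decide (fu E = (rep (fz E).1.1).1)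
            = decide (fu E' = (rep (fz E').1.1).1) := congrArg Prod.snd hEE
        rw [← hz] at hb
        have hu : fu E = fu E' := by
          have hmE := hmem E
          have hmE' := hmem E'
          rw [← hz] at hmE'
          rw [hrep ((fz E).1.1), Sym2.mem_iff] at hmE hmE'
          rcases Bool.eq_false_or_eq_true (decide (fu E = (rep (fz E).1.1).1)) with hd | hd
          · have h1 : fu E = (rep (fz E).1.1).1 := of_decide_eq_true hd
            rw [hd] at hb
            have h2 : fu E' = (rep (fz E).1.1).1 := of_decide_eq_true hb.symm
            exact h1.trans h2.symm
          · have h1 : ¬ (fu E = (rep (fz E).1.1).1) := of_decide_eq_false hd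
            rw [hd] at hb
            have h2 : ¬ (fu E' = (rep (fz E).1.1).1) := of_decide_eq_false hb.symm
            rcases hmE with hh | hh
            · exact (h1 hh).elim
            · rcases hmE' with hh' | hh'
              · exact (h2 hh').elim
              · exact hh.trans hh'.symm
        apply Subtype.ext
        rw [hspec E, hspec E', hu, hz]
      have hcard : Nat.card (diamG ι (t+1)).edgeSet
          ≤ Nat.card (((diamG ι t).edgeSet × ι) × Bool) :=
        Nat.card_le_card_of_injective F hinj
      have hcard2 : Nat.card (((diamG ι t).edgeSet × ι) × Bool)
          = Nat.card (diamG ι t).edgeSet * Nat.card ι * 2 := by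
        rw [Nat.card_prod, Nat.card_prod]
        have : Nat.card Bool = 2 := by
          rw [Nat.card_eq_fintype_card]; exact Fintype.card_bool
        rw [this]
      have hpow : (2 * Nat.card ι)^(t+1) = (2 * Nat.card ι)^t * Nat.card ι * 2 := by ring
      calc Nat.card (diamG ι (t+1)).edgeSet
          ≤ Nat.card (diamG ι t).edgeSet * Nat.card ι * 2 := by omega
        _ ≤ (2 * Nat.card ι)^t * Nat.card ι * 2 := by
            have := Nat.mul_le_mul_right (Nat.card ι) ih
            omega
        _ = (2 * Nat.card ι)^(t+1) := hpow.symm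

/-! ## Tree lemmas -/

lemma tree_adj_len {n : ℕ} {u v : treeV n} (h : (treeG n).Adj u v) :
    u.1.length + 1 = v.1.length ∨ v.1.length + 1 = u.1.length := by
  rcases h with ⟨b, hb⟩ | ⟨b, hb⟩
  · left; rw [hb, List.length_cons]
  · right; rw [hb, List.length_cons]

lemma tree_walk_len {n : ℕ} {u v : treeV n} (W : (treeG n).Walk u v) :
    (u.1.length ≤ v.1.length + W.length ∧ v.1.length ≤ u.1.length + W.length)
      ∧ (W.length + u.1.length + v.1.length) % 2 = 0 := by
  induction W with
  | nil => simp only [SimpleGraph.Walk.length_nil]; omega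
  | cons h W ih =>
      have := tree_adj_len h
      simp only [SimpleGraph.Walk.length_cons]
      omega

lemma tree_connected (n : ℕ) : (treeG n).Connected := by
  have key : ∀ (l : List Bool) (hl : l.length ≤ n),
      (treeG n).Reachable ⟨l, hl⟩ (treeRoot n) := by
    intro l
    induction l with
    | nil =>
        intro hl
        have : (⟨[], hl⟩ : treeV n) = treeRoot n := Subtype.ext rfl
        rw [this]
    | cons b l ih =>
        intro hl
        have hl' : l.length ≤ n := by
          rw [List.length_cons] at hl; omega
        have hadj : (treeG n).Adj ⟨b::l, hl⟩ ⟨l, hl'⟩ := Or.inr ⟨b, rfl⟩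
        exact hadj.reachable.trans (ih hl')
  rw [SimpleGraph.connected_iff]
  exact ⟨fun u v => (key u.1 u.2).trans (key v.1 v.2).symm, ⟨treeRoot n⟩⟩

lemma tree_dist_len {n : ℕ} (u v : treeV n) :
    (u.1.length ≤ v.1.length + (treeG n).dist u v
      ∧ v.1.length ≤ u.1.length + (treeG n).dist u v)
    ∧ ((treeG n).dist u v + u.1.length + v.1.length) % 2 = 0 := by
  obtain ⟨W, hW⟩ := (tree_connected n).exists_walk_length_eq_dist u v
  have := tree_walk_len W
  rw [hW] at this
  exact this

lemma tree_dist_two {n : ℕ} {u v : treeV n} (hne : u ≠ v)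
    (hlen : u.1.length = v.1.length) : 2 ≤ (treeG n).dist u v := by
  have hpos := (tree_connected n).pos_dist_of_ne hne
  have := (tree_dist_len u v).2
  omega

lemma tree_dist_append {n : ℕ} (l : List Bool) (hl : l.length ≤ n) :
    ∀ (l' : List Bool) (h : (l' ++ l).length ≤ n),
      (treeG n).dist ⟨l, hl⟩ ⟨l' ++ l, h⟩ ≤ l'.length := by
  intro l'
  induction l' with
  | nil =>
      intro h
      have : (⟨[] ++ l, h⟩ : treeV n) = ⟨l, hl⟩ := Subtype.ext (by simp)
      exact (le_of_eq (SimpleGraph.dist_self (G := treeG n) (v := ⟨l, hl⟩))).trans (Nat.zero_le _)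
  | cons b l'' ih =>
      intro h
      have h2 : (l'' ++ l).length ≤ n := by
        simp only [List.length_append, List.length_cons] at h ⊢
        omega
      have hadj : (treeG n).Adj ⟨l'' ++ l, h2⟩ ⟨(b :: l'') ++ l, h⟩ := Or.inl ⟨b, rfl⟩
      have htri := (tree_connected n).dist_triangle (u := (⟨l, hl⟩ : treeV n))
        (v := ⟨l'' ++ l, h2⟩) (w := ⟨(b :: l'') ++ l, h⟩)
      have hd1 := SimpleGraph.dist_le hadj.toWalk
      have : hadj.toWalk.length = 1 := rfl
      have := ih h2
      exact htri.trans ((Nat.add_le_add_left (hd1.trans (le_of_eq rfl)) _).trans (Nat.add_le_add_right this 1))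

end Aux5
theorem three_inequalities_contradiction (k n m : ℕ) (hk : 2 ≤ k)
    (F : treeV n → diamV (Fin k) m) (p d r : ℕ) (α : ℝ)
    (hF : ∀ u v : treeV n,
      (2 : ℝ) ^ p * (treeG n).dist u v ≤ ((diamG (Fin k) m).dist (F u) (F v) : ℝ) ∧
      ((diamG (Fin k) m).dist (F u) (F v) : ℝ) ≤ α * 2 ^ p * (treeG n).dist u v)
    (hr1 : 1 ≤ r) (hrn : r < n)
    (h1 : (2 : ℝ) ^ ((d : ℤ) - 1) > α * 2 ^ p * (r + 1))
    (h2 : ((2 * k : ℕ) : ℝ) ^ ((d : ℤ) - (p : ℤ)) < 2 ^ r)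
    (h3 : (2 : ℝ) ^ d < 2 ^ p * ((n : ℝ) - r)) : False := by
  classical
  haveI : Nonempty (Fin k) := ⟨⟨0, by omega⟩⟩
  have htconn := tree_connected n
  have hp2 : (0:ℝ) < 2 ^ p := by positivity
  -- α ≥ 1
  have hroot : ([] : List Bool).length ≤ n := by simp
  have hv1 : ([false] : List Bool).length ≤ n := by
    simp only [List.length_cons, List.length_nil]; omega
  have hadj1 : (treeG n).Adj ⟨[], hroot⟩ ⟨[false], hv1⟩ := Or.inl ⟨false, rfl⟩
  have hne1 : (⟨[], hroot⟩ : treeV n) ≠ ⟨[false], hv1⟩ := by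
    intro h
    simpa using congrArg (fun w => w.1.length) h
  have hdist1 : (treeG n).dist ⟨[], hroot⟩ ⟨[false], hv1⟩ = 1 := by
    have hle := SimpleGraph.dist_le hadj1.toWalk
    have hlen : hadj1.toWalk.length = 1 := rfl
    have hpos := htconn.pos_dist_of_ne hne1
    omega
  have halpha : 1 ≤ α := by
    obtain ⟨hlow, hhigh⟩ := hF ⟨[], hroot⟩ ⟨[false], hv1⟩
    rw [hdist1] at hlow hhigh
    push_cast at hlow hhigh
    nlinarith
  -- d ≥ p + 3
  have hd3 : p + 3 ≤ d := by
    have hstep : (2:ℝ)^((p:ℤ)+1) ≤ α * 2^p * (r+1) := by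
      have h1' : (2:ℝ)^((p:ℤ)+1) = 2^p * 2 := by
        rw [zpow_add₀ (by norm_num : (2:ℝ) ≠ 0), zpow_natCast]
        norm_num
      rw [h1']
      have hr' : (2:ℝ) ≤ (r:ℝ) + 1 := by
        have : (1:ℝ) ≤ (r:ℝ) := by exact_mod_cast hr1
        linarith
      have haux : (0:ℝ) ≤ (α - 1) * (2^p * ((r:ℝ)+1)) :=
        mul_nonneg (by linarith) (by positivity)
      nlinarith [haux, hp2, hr', halpha]
    have hlt : ((p:ℤ)+1) < ((d:ℤ)-1) := by
      rw [← zpow_lt_zpow_iff_right₀ (by norm_num : (1:ℝ) < 2)]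
      exact lt_of_le_of_lt hstep h1
    omega
  -- the chain
  set N := n - r with hN
  have hchainP : ∀ t : ℕ, (List.replicate (min t n) false).length ≤ n := by
    intro t; simp
  set chain : ℕ → treeV n := fun t => ⟨List.replicate (min t n) false, hchainP t⟩
    with hchaindef
  have hchain1 : ∀ t, t ≤ n → (chain t).1.length = t := by
    intro t ht
    show (List.replicate (min t n) false).length = t
    simp [min_eq_left ht]
  have hchainadj : ∀ t, t + 1 ≤ n → (treeG n).Adj (chain t) (chain (t+1)) := by
    intro t ht
    refine Or.inl ⟨false, ?_⟩
    show List.replicate (min (t+1) n) false = false :: List.replicate (min t n) false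
    rw [min_eq_left ht, min_eq_left (by omega), List.replicate_succ]
  have hchaindist1 : ∀ t, t + 1 ≤ n →
      ((diamG (Fin k) m).dist (F (chain t)) (F (chain (t+1))) : ℝ) ≤ α * 2^p := by
    intro t ht
    obtain ⟨_, hhigh⟩ := hF (chain t) (chain (t+1))
    have hd : (treeG n).dist (chain t) (chain (t+1)) = 1 := by
      have hle := SimpleGraph.dist_le (hchainadj t ht).toWalk
      have hlen : (hchainadj t ht).toWalk.length = 1 := rfl
      have hne : chain t ≠ chain (t+1) := by
        intro h
        have h' := congrArg (fun w : treeV n => w.1.length) h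
        rw [hchain1 t (by omega), hchain1 (t+1) ht] at h'
        omega
      have hpos := htconn.pos_dist_of_ne hne
      omega
    rw [hd] at hhigh
    push_cast at hhigh
    linarith
  -- lower bound on the endpoint distance
  have hDlow : (2:ℝ)^p * N ≤ ((diamG (Fin k) m).dist (F (chain 0)) (F (chain N)) : ℝ) := by
    obtain ⟨hlow, _⟩ := hF (chain 0) (chain N)
    have htd : N ≤ (treeG n).dist (chain 0) (chain N) := by
      have hh := (tree_dist_len (chain 0) (chain N)).1
      rw [hchain1 0 (by omega), hchain1 N (by omega)] at hh
      omega
    have htd' : (N:ℝ) ≤ ((treeG n).dist (chain 0) (chain N) : ℝ) := by exact_mod_cast htd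
    have hmul := mul_le_mul_of_nonneg_left htd' (le_of_lt hp2)
    linarith
  have hNr : ((n:ℝ) - r) = (N:ℝ) := by
    rw [hN]
    rw [Nat.cast_sub (le_of_lt hrn)]
  have h3' : (2:ℝ)^d < ((diamG (Fin k) m).dist (F (chain 0)) (F (chain N)) : ℝ) := by
    rw [hNr] at h3
    linarith
  -- d < m
  have hdm : d + 1 ≤ m := by
    have hdiam := diam_dist_le (ι := Fin k) m (F (chain 0)) (F (chain N))
    have hdiam' : ((diamG (Fin k) m).dist (F (chain 0)) (F (chain N)) : ℝ) ≤ 2^m := by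
      exact_mod_cast hdiam
    have hlt : (2:ℝ)^d < 2^m := lt_of_lt_of_le h3' hdiam'
    have := (pow_lt_pow_iff_right₀ (by norm_num : (1:ℝ) < 2)).mp hlt
    omega
  obtain ⟨c, rfl⟩ : ∃ c, d = ((c+2)+p)+1 := ⟨d - p - 3, by omega⟩
  obtain ⟨j, rfl⟩ : ∃ j, m = (j+1)+((c+2)+p) := ⟨m - (((c+2)+p)+1), by omega⟩
  have hDconn := diam_connected (ι := Fin k) ((j+1)+((c+2)+p))
  -- build the big walk
  have bigwalk : ∀ t, t ≤ N →
      ∃ (W : (diamG (Fin k) ((j+1)+((c+2)+p))).Walk (F (chain 0)) (F (chain t))),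
      ∀ x ∈ W.support, ∃ s, s ≤ N ∧
        ((diamG (Fin k) ((j+1)+((c+2)+p))).dist (F (chain s)) x : ℝ) ≤ α * 2^p := by
    intro t
    induction t with
    | zero =>
        intro _
        refine ⟨SimpleGraph.Walk.nil, ?_⟩
        intro x hx
        rw [SimpleGraph.Walk.mem_support_nil_iff] at hx
        subst hx
        refine ⟨0, by omega, ?_⟩
        rw [SimpleGraph.dist_self]
        push_cast
        positivity
    | succ t ih =>
        intro ht
        obtain ⟨W, hW⟩ := ih (by omega)
        obtain ⟨Wg, hWg⟩ := hDconn.exists_walk_length_eq_dist (F (chain t)) (F (chain (t+1)))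
        refine ⟨W.append Wg, ?_⟩
        intro x hx
        rw [SimpleGraph.Walk.support_append] at hx
        rcases List.mem_append.mp hx with hx | hx
        · exact hW x hx
        · have hx' : x ∈ Wg.support := List.mem_of_mem_tail hx
          refine ⟨t, by omega, ?_⟩
          have htake := SimpleGraph.Walk.length_takeUntil_le Wg hx'
          have hdx : (diamG (Fin k) ((j+1)+((c+2)+p))).dist (F (chain t)) x ≤ Wg.length :=
            le_trans (SimpleGraph.dist_le (Wg.takeUntil x hx')) htake
          have hstep := hchaindist1 t (by omega)
          rw [hWg] at hdx
          have hcast : ((diamG (Fin k) ((j+1)+((c+2)+p))).dist (F (chain t)) x : ℝ)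
              ≤ ((diamG (Fin k) ((j+1)+((c+2)+p))).dist (F (chain t)) (F (chain (t+1))) : ℝ) := by
            exact_mod_cast hdx
          linarith
  obtain ⟨W, hWsup⟩ := bigwalk N le_rfl
  by_cases hhit : ∀ x ∈ W.support, ∀ z : (diamG (Fin k) j).edgeSet × (Fin k),
      x ≠ diamLift (Fin k) (j+1) ((c+2)+p) (Sum.inr z)
  · have havoid := walk_avoid_dist_le W hhit
    have hcast : ((diamG (Fin k) ((j+1)+((c+2)+p))).dist (F (chain 0)) (F (chain N)) : ℝ)
        ≤ 2^(((c+2)+p)+1) := by exact_mod_cast havoid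
    linarith
  · push_neg at hhit
    obtain ⟨w, hwsup, z, hwz⟩ := hhit
    obtain ⟨e, i⟩ := z
    obtain ⟨s, hsN, hsw⟩ := hWsup w hwsup
    rw [hwz] at hsw
    obtain ⟨u', v', he', _⟩ := sym2_edge_rep e.2
    have hsn : s ≤ n := by omega
    have hvlen : ∀ σ : Fin r → Bool, (List.ofFn σ ++ List.replicate s false).length ≤ n := by
      intro σ
      simp only [List.length_append, List.length_ofFn, List.length_replicate]
      omega
    set vtx : (Fin r → Bool) → treeV n :=
      fun σ => ⟨List.ofFn σ ++ List.replicate s false, hvlen σ⟩ with hvtxdef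
    have hbase : chain s = ⟨List.replicate s false, by simpa using hsn⟩ := by
      apply Subtype.ext
      show List.replicate (min s n) false = List.replicate s false
      rw [min_eq_left hsn]
    have hdistvt : ∀ σ, ((treeG n).dist (chain s) (vtx σ) : ℝ) ≤ r := by
      intro σ
      rw [hbase]
      have hh := tree_dist_append (List.replicate s false) (by simpa using hsn) (List.ofFn σ) (hvlen σ)
      have hh2 : (treeG n).dist (⟨List.replicate s false, by simpa using hsn⟩ : treeV n) (vtx σ) ≤ r := by
        rw [hvtxdef]
        simpa [List.length_ofFn] using hh
      exact_mod_cast hh2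
    -- exponent rewriting for h1
    have hzp1 : (2:ℝ)^((((((c+2)+p)+1 : ℕ)):ℤ) - 1) = ((2^((c+2)+p) : ℕ) : ℝ) := by
      rw [show ((((((c+2)+p)+1 : ℕ)):ℤ) - 1) = (((c+2)+p : ℕ):ℤ) by push_cast; ring,
        zpow_natCast]
      push_cast
      ring
    rw [hzp1] at h1
    have hballσ : ∀ σ, ∃ (bb : diamV (Fin k) j) (_ : bb ∈ e.1)
        (h : (diamG (Fin k) (j+1)).Adj (Sum.inl bb) (Sum.inr (e, i))),
        F (vtx σ) ∈ Set.range (subEmbed (Fin k) h ((c+2)+p)) := by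
      intro σ
      apply ball_subset
      -- ℕ-distance bound via ℝ
      have htri := hDconn.dist_triangle
        (u := diamLift (Fin k) (j+1) ((c+2)+p) (Sum.inr (e, i)))
        (v := F (chain s)) (w := F (vtx σ))
      have hcomm : (diamG (Fin k) ((j+1)+((c+2)+p))).dist
            (diamLift (Fin k) (j+1) ((c+2)+p) (Sum.inr (e, i))) (F (chain s))
          = (diamG (Fin k) ((j+1)+((c+2)+p))).dist (F (chain s))
            (diamLift (Fin k) (j+1) ((c+2)+p) (Sum.inr (e, i))) := SimpleGraph.dist_comm
      have hup : ((diamG (Fin k) ((j+1)+((c+2)+p))).dist (F (chain s)) (F (vtx σ)) : ℝ)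
          ≤ α * 2^p * r := by
        obtain ⟨_, hhigh⟩ := hF (chain s) (vtx σ)
        have hdv := hdistvt σ
        have hnn : (0:ℝ) ≤ α * 2^p := mul_nonneg (by linarith) (le_of_lt hp2)
        have hmul := mul_le_mul_of_nonneg_left hdv hnn
        linarith
      have hreal : ((diamG (Fin k) ((j+1)+((c+2)+p))).dist
          (diamLift (Fin k) (j+1) ((c+2)+p) (Sum.inr (e, i))) (F (vtx σ)) : ℝ)
          < ((2^((c+2)+p) : ℕ) : ℝ) := by
        have hcast : ((diamG (Fin k) ((j+1)+((c+2)+p))).dist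
            (diamLift (Fin k) (j+1) ((c+2)+p) (Sum.inr (e, i))) (F (vtx σ)) : ℝ)
            ≤ ((diamG (Fin k) ((j+1)+((c+2)+p))).dist
              (diamLift (Fin k) (j+1) ((c+2)+p) (Sum.inr (e, i))) (F (chain s)) : ℝ)
            + ((diamG (Fin k) ((j+1)+((c+2)+p))).dist (F (chain s)) (F (vtx σ)) : ℝ) := by
          exact_mod_cast htri
        rw [hcomm] at hcast
        linarith [hsw, hup, hcast, h1]
      exact_mod_cast hreal
    have key : ∀ σ, ∃ (bb : diamV (Fin k) j) (u₂ v₂ : diamV (Fin k) (c+2)),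
        bb ∈ e.1 ∧ ∃ (_ : (diamG (Fin k) (j+1)).Adj (Sum.inl bb) (Sum.inr (e, i)))
          (h₂ : (diamG (Fin k) (c+2)).Adj u₂ v₂) (x₁ : diamV (Fin k) p),
          F (vtx σ) = subEmbed (Fin k) ‹(diamG (Fin k) (j+1)).Adj (Sum.inl bb) (Sum.inr (e, i))›
            ((c+2)+p) (subEmbed (Fin k) h₂ p x₁) := by
      intro σ
      obtain ⟨bb, hbb, hb, x₀, hx₀⟩ := hballσ σ
      obtain ⟨u₂, v₂, h₂, x₁, hx₁⟩ := cover_vertex (c+2) p x₀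
      exact ⟨bb, u₂, v₂, hbb, hb, h₂, x₁, by rw [← hx₀, ← hx₁]⟩
    choose fbb fu fv hbbmem fhb fh2 fx heq using key
    -- separation
    have hsep : ∀ σ τ, σ ≠ τ →
        (2:ℝ)^p * 2 ≤ ((diamG (Fin k) ((j+1)+((c+2)+p))).dist (F (vtx σ)) (F (vtx τ)) : ℝ) := by
      intro σ τ hst
      obtain ⟨hlow, _⟩ := hF (vtx σ) (vtx τ)
      have hne : vtx σ ≠ vtx τ := by
        intro hcon
        apply hst
        have h' : List.ofFn σ ++ List.replicate s false
            = List.ofFn τ ++ List.replicate s false := congrArg Subtype.val hcon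
        exact List.ofFn_injective (List.append_left_injective _ h')
      have hlen : (vtx σ).1.length = (vtx τ).1.length := by
        show (List.ofFn σ ++ _).length = (List.ofFn τ ++ _).length
        simp [List.length_ofFn]
      have h2d := tree_dist_two hne hlen
      have h2d' : (2:ℝ) ≤ ((treeG n).dist (vtx σ) (vtx τ) : ℝ) := by exact_mod_cast h2d
      have hmul := mul_le_mul_of_nonneg_left h2d' (le_of_lt hp2)
      linarith
    -- the injection
    set Φ : (Fin r → Bool) → Bool × (diamG (Fin k) (c+2)).edgeSet :=
      fun σ => (decide (fbb σ = u'),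
        ⟨s(fu σ, fv σ), (SimpleGraph.mem_edgeSet _).mpr (fh2 σ)⟩) with hΦdef
    have hΦinj : Function.Injective Φ := by
      intro σ τ hΦeq
      by_contra hst
      have hside : decide (fbb σ = u') = decide (fbb τ = u') := congrArg Prod.fst hΦeq
      have hedge : s(fu σ, fv σ) = s(fu τ, fv τ) :=
        congrArg (fun w : Bool × (diamG (Fin k) (c+2)).edgeSet => w.2.1) hΦeq
      have hbbeq : fbb σ = fbb τ := by
        have hmσ := hbbmem σ
        have hmτ := hbbmem τ
        rw [he', Sym2.mem_iff] at hmσ hmτ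
        rcases Bool.eq_false_or_eq_true (decide (fbb σ = u')) with hd | hd
        · have e1 : fbb σ = u' := of_decide_eq_true hd
          have e2 : fbb τ = u' := of_decide_eq_true (by rw [← hside]; exact hd)
          rw [e1, e2]
        · have e1 : ¬ (fbb σ = u') := of_decide_eq_false hd
          have e2 : ¬ (fbb τ = u') := of_decide_eq_false (by rw [← hside]; exact hd)
          rcases hmσ with hh | hh
          · exact (e1 hh).elim
          · rcases hmτ with hh' | hh'
            · exact (e2 hh').elim
            · rw [hh, hh']
      have houter : ∀ x, subEmbed (Fin k) (fhb τ) ((c+2)+p) x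
          = subEmbed (Fin k) (fhb σ) ((c+2)+p) x :=
        subEmbed_congr (by rw [hbbeq]) (fhb τ) (fhb σ)
      have hrange : subEmbed (Fin k) (fh2 τ) p (fx τ)
          ∈ Set.range (subEmbed (Fin k) (fh2 σ) p) := by
        rw [range_sym2 (fh2 σ) (fh2 τ) hedge p]
        exact ⟨fx τ, rfl⟩
      obtain ⟨y, hy⟩ := hrange
      have hFσ := heq σ
      have hFτ := heq τ
      rw [houter, ← hy] at hFτ
      have hd1 : (diamG (Fin k) ((j+1)+((c+2)+p))).dist (F (vtx σ)) (F (vtx τ))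
          ≤ (diamG (Fin k) ((c+2)+p)).dist (subEmbed (Fin k) (fh2 σ) p (fx σ))
            (subEmbed (Fin k) (fh2 σ) p y) := by
        rw [hFσ, hFτ]
        exact hom_dist_le _ (diam_connected _) _ _
      have hd2 : (diamG (Fin k) ((c+2)+p)).dist (subEmbed (Fin k) (fh2 σ) p (fx σ))
            (subEmbed (Fin k) (fh2 σ) p y)
          ≤ (diamG (Fin k) p).dist (fx σ) y := hom_dist_le _ (diam_connected _) _ _
      have hd3' : (diamG (Fin k) p).dist (fx σ) y ≤ 2^p := diam_dist_le _ _ _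
      have hsmall : ((diamG (Fin k) ((j+1)+((c+2)+p))).dist (F (vtx σ)) (F (vtx τ)) : ℝ)
          ≤ (2:ℝ)^p := by
        have hn' : (diamG (Fin k) ((j+1)+((c+2)+p))).dist (F (vtx σ)) (F (vtx τ)) ≤ 2^p := by
          omega
        calc ((diamG (Fin k) ((j+1)+((c+2)+p))).dist (F (vtx σ)) (F (vtx τ)) : ℝ)
            ≤ ((2^p : ℕ) : ℝ) := by exact_mod_cast hn'
          _ = (2:ℝ)^p := by push_cast; ring
      have := hsep σ τ hst
      linarith
    -- cardinality count
    have hfinE : Finite (diamV (Fin k) (c+2)) := diam_finite _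
    have hfinS : Finite (Sym2 (diamV (Fin k) (c+2))) := Quot.finite _
    have hcard1 : Nat.card (Fin r → Bool) ≤ Nat.card (Bool × (diamG (Fin k) (c+2)).edgeSet) :=
      Nat.card_le_card_of_injective Φ hΦinj
    have hcardfun : Nat.card (Fin r → Bool) = 2^r := by
      rw [Nat.card_fun]
      simp [Nat.card_eq_fintype_card]
    have hcardprod : Nat.card (Bool × (diamG (Fin k) (c+2)).edgeSet)
        = 2 * Nat.card (diamG (Fin k) (c+2)).edgeSet := by
      rw [Nat.card_prod]
      congr 1
      rw [Nat.card_eq_fintype_card]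
      exact Fintype.card_bool
    have hedgebound := edge_card_le (ι := Fin k) (c+2)
    have hkcard : Nat.card (Fin k) = k := by simp [Nat.card_eq_fintype_card]
    rw [hkcard] at hedgebound
    have hzp2 : ((2 * k : ℕ) : ℝ) ^ ((((((c+2)+p)+1 : ℕ)):ℤ) - (p:ℤ))
        = (((2*k)^(c+3) : ℕ) : ℝ) := by
      rw [show ((((((c+2)+p)+1 : ℕ)):ℤ) - (p:ℤ)) = ((c+3 : ℕ):ℤ) by push_cast; ring,
        zpow_natCast]
      push_cast
      ring
    rw [hzp2] at h2
    have h2n : (2*k)^(c+3) < 2^r := by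
      have h2r : (((2*k)^(c+3) : ℕ) : ℝ) < ((2^r : ℕ) : ℝ) := by
        push_cast
        push_cast at h2
        linarith
      exact_mod_cast h2r
    have hstep2 : 2 * (2*k)^(c+2) ≤ (2*k)^(c+3) := by
      have hpow : (2*k)^(c+3) = (2*k)^(c+2) * (2*k) := pow_succ _ _
      have hk2 : 2 ≤ 2*k := by omega
      have hmul := Nat.mul_le_mul_left ((2*k)^(c+2)) hk2
      omega
    omega
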